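/- Sandwich convergence: if δ_k := C(T̲_k) − C(T̄_k) ≤ ε for some k, then any two values among { C(T_k), C(T_K), C(T_m) for k ≤ m ≤ K } differ by at most ε. -/

import Mathlib

/-- Cost of a path `τ` under traversability map `T` with auxiliary cost `f'`. -/
def pathCost {V : Type*} (f' : List V → ℝ) (T : V → ℝ) (τ : List V) : ℝ :=
  (τ.map fun v => (1 - T v) ^ 2).sum + f' τ

/-- Feasible path set: paths in `P` all of whose vertices have traversability at least `θ`. -/
def feasSet {V : Type*} (P : Finset (List V)) (θ : ℝ) (T : V → ℝ) : Set (List V) :=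
  {τ | τ ∈ P ∧ ∀ v ∈ τ, θ ≤ T v}

/-- Optimal path cost over the feasible set. -/
noncomputable def optCost {V : Type*} (P : Finset (List V)) (θ : ℝ)
    (f' : List V → ℝ) (T : V → ℝ) : ℝ :=
  sInf (pathCost f' T '' feasSet P θ T)

lemma pathCost_anti {V : Type*} (f' : List V → ℝ) (T1 T2 : V → ℝ)
    (h12 : ∀ v, T1 v ≤ T2 v) (h2 : ∀ v, T2 v ≤ 1) (τ : List V) :
    pathCost f' T2 τ ≤ pathCost f' T1 τ := by
  unfold pathCost
  have : (τ.map fun v => (1 - T2 v) ^ 2).sum ≤ (τ.map fun v => (1 - T1 v) ^ 2).sum := by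
    induction τ with
    | nil => simp
    | cons a l ih =>
      simp only [List.map_cons, List.sum_cons]
      have ha1 := h12 a; have ha2 := h2 a
      nlinarith
  linarith

lemma feasSet_mono {V : Type*} (P : Finset (List V)) (θ : ℝ) (T1 T2 : V → ℝ)
    (h12 : ∀ v, T1 v ≤ T2 v) : feasSet P θ T1 ⊆ feasSet P θ T2 := by
  rintro τ ⟨hP, hθ⟩
  exact ⟨hP, fun v hv => (hθ v hv).trans (h12 v)⟩

lemma optCost_anti {V : Type*} (P : Finset (List V)) (θ : ℝ) (f' : List V → ℝ)
    (T1 T2 : V → ℝ) (h12 : ∀ v, T1 v ≤ T2 v) (h2 : ∀ v, T2 v ≤ 1)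
    (hne : (feasSet P θ T1).Nonempty) :
    optCost P θ f' T2 ≤ optCost P θ f' T1 := by
  have hsub := feasSet_mono P θ T1 T2 h12
  have hfin : (pathCost f' T2 '' feasSet P θ T2).Finite :=
    Set.Finite.image _ (Set.Finite.subset P.finite_toSet (fun τ hτ => hτ.1))
  have hbdd : BddBelow (pathCost f' T2 '' feasSet P θ T2) := hfin.bddBelow
  apply le_csInf (hne.image _)
  rintro b ⟨τ, hτ, rfl⟩
  have h1 : sInf (pathCost f' T2 '' feasSet P θ T2) ≤ pathCost f' T2 τ :=
    csInf_le hbdd ⟨τ, hsub hτ, rfl⟩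
  exact h1.trans (pathCost_anti f' T1 T2 h12 h2 τ)

/-- Sandwich convergence: once the bound `δ_k` is at most `ε`, the intermediate maps
`T_m` (for `k ≤ m ≤ K`) are pointwise sandwiched between the envelopes, and any two of
their optimal costs differ by at most `ε`. -/
theorem sandwich_convergence
    {V : Type*} (P : Finset (List V)) (θ : ℝ) (f' : List V → ℝ)
    (K : ℕ) (That : ℕ → V → ℝ) (w : ℕ → ℝ)
    (hw : ∀ j, 1 ≤ j → j ≤ K → 0 < w j)
    (hT : ∀ j, 1 ≤ j → j ≤ K → ∀ v, 0 ≤ That j v ∧ That j v ≤ 1)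
    (k : ℕ) (hk1 : 1 ≤ k) (hkK : k ≤ K)
    (hne : (feasSet P θ (fun v =>
      (∑ j ∈ Finset.Icc 1 k, w j * That j v) / (∑ j ∈ Finset.Icc 1 K, w j))).Nonempty)
    (ε : ℝ) (hε : 0 ≤ ε)
    (hδ : optCost P θ f' (fun v =>
            (∑ j ∈ Finset.Icc 1 k, w j * That j v) / (∑ j ∈ Finset.Icc 1 K, w j))
          - optCost P θ f' (fun v =>
            (∑ j ∈ Finset.Icc 1 k, w j * That j v + ∑ j ∈ Finset.Icc (k+1) K, w j)
              / (∑ j ∈ Finset.Icc 1 K, w j)) ≤ ε) :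
    (∀ m, k ≤ m → m ≤ K → ∀ v : V,
        (∑ j ∈ Finset.Icc 1 k, w j * That j v) / (∑ j ∈ Finset.Icc 1 K, w j)
          ≤ (∑ j ∈ Finset.Icc 1 m, w j * That j v) / (∑ j ∈ Finset.Icc 1 m, w j)
      ∧ (∑ j ∈ Finset.Icc 1 m, w j * That j v) / (∑ j ∈ Finset.Icc 1 m, w j)
          ≤ (∑ j ∈ Finset.Icc 1 k, w j * That j v + ∑ j ∈ Finset.Icc (k+1) K, w j)
              / (∑ j ∈ Finset.Icc 1 K, w j))
    ∧ (∀ m m', k ≤ m → m ≤ K → k ≤ m' → m' ≤ K →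
        |optCost P θ f' (fun v =>
            (∑ j ∈ Finset.Icc 1 m, w j * That j v) / (∑ j ∈ Finset.Icc 1 m, w j))
          - optCost P θ f' (fun v =>
            (∑ j ∈ Finset.Icc 1 m', w j * That j v) / (∑ j ∈ Finset.Icc 1 m', w j))|
        ≤ ε) := by
  have hIcc : ∀ x : ℕ, Finset.Icc 1 x = Finset.Ioc 0 x := by
    intro x; rw [← Finset.Icc_add_one_left_eq_Ioc]; rfl
  have hS : 0 < ∑ j ∈ Finset.Icc 1 K, w j := by
    apply Finset.sum_pos (fun j hj => hw j (Finset.mem_Icc.mp hj).1 (Finset.mem_Icc.mp hj).2)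
    exact ⟨1, Finset.mem_Icc.mpr ⟨le_refl 1, hk1.trans hkK⟩⟩
  have hσA : ∀ v, (∑ j ∈ Finset.Icc 1 k, w j * That j v) ≤ ∑ j ∈ Finset.Icc 1 k, w j := by
    intro v
    apply Finset.sum_le_sum
    intro j hj
    have hj' := Finset.mem_Icc.mp hj
    have hwj := hw j hj'.1 (hj'.2.trans hkK)
    have := (hT j hj'.1 (hj'.2.trans hkK) v).2
    nlinarith
  have hσS : (∑ j ∈ Finset.Icc 1 k, w j) + (∑ j ∈ Finset.Icc (k+1) K, w j)
      = ∑ j ∈ Finset.Icc 1 K, w j := by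
    rw [hIcc, hIcc, Finset.Icc_add_one_left_eq_Ioc]
    exact Finset.sum_Ioc_consecutive _ (Nat.zero_le k) hkK
  -- pointwise sandwich
  have sand : ∀ m, k ≤ m → m ≤ K → ∀ v : V,
      (∑ j ∈ Finset.Icc 1 k, w j * That j v) / (∑ j ∈ Finset.Icc 1 K, w j)
        ≤ (∑ j ∈ Finset.Icc 1 m, w j * That j v) / (∑ j ∈ Finset.Icc 1 m, w j)
    ∧ (∑ j ∈ Finset.Icc 1 m, w j * That j v) / (∑ j ∈ Finset.Icc 1 m, w j)
        ≤ (∑ j ∈ Finset.Icc 1 k, w j * That j v + ∑ j ∈ Finset.Icc (k+1) K, w j)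
            / (∑ j ∈ Finset.Icc 1 K, w j) := by
    intro m hkm hmK v
    have hs : 0 < ∑ j ∈ Finset.Icc 1 m, w j := by
      apply Finset.sum_pos (fun j hj => hw j (Finset.mem_Icc.mp hj).1
        ((Finset.mem_Icc.mp hj).2.trans hmK))
      exact ⟨1, Finset.mem_Icc.mpr ⟨le_refl 1, hk1.trans hkm⟩⟩
    have hsS : (∑ j ∈ Finset.Icc 1 m, w j) ≤ ∑ j ∈ Finset.Icc 1 K, w j := by
      apply Finset.sum_le_sum_of_subset_of_nonneg (Finset.Icc_subset_Icc_right hmK)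
      intro j hj _
      exact (hw j (Finset.mem_Icc.mp hj).1 (Finset.mem_Icc.mp hj).2).le
    have hA0 : 0 ≤ ∑ j ∈ Finset.Icc 1 k, w j * That j v := by
      apply Finset.sum_nonneg
      intro j hj
      have hj' := Finset.mem_Icc.mp hj
      exact mul_nonneg (hw j hj'.1 (hj'.2.trans hkK)).le (hT j hj'.1 (hj'.2.trans hkK) v).1
    have hAAm : (∑ j ∈ Finset.Icc 1 k, w j * That j v)
        ≤ ∑ j ∈ Finset.Icc 1 m, w j * That j v := by
      apply Finset.sum_le_sum_of_subset_of_nonneg (Finset.Icc_subset_Icc_right hkm)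
      intro j hj _
      have hj' := Finset.mem_Icc.mp hj
      exact mul_nonneg (hw j hj'.1 (hj'.2.trans hmK)).le (hT j hj'.1 (hj'.2.trans hmK) v).1
    have hσ : (∑ j ∈ Finset.Icc 1 k, w j) + (∑ j ∈ Finset.Ioc k m, w j)
        = ∑ j ∈ Finset.Icc 1 m, w j := by
      rw [hIcc, hIcc]
      exact Finset.sum_Ioc_consecutive _ (Nat.zero_le k) hkm
    have hAmsplit : (∑ j ∈ Finset.Icc 1 m, w j * That j v)
        = (∑ j ∈ Finset.Icc 1 k, w j * That j v) + ∑ j ∈ Finset.Ioc k m, w j * That j v := by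
      rw [hIcc, hIcc]
      exact (Finset.sum_Ioc_consecutive _ (Nat.zero_le k) hkm).symm
    have hBm : (∑ j ∈ Finset.Ioc k m, w j * That j v) ≤ ∑ j ∈ Finset.Ioc k m, w j := by
      apply Finset.sum_le_sum
      intro j hj
      have hj' := Finset.mem_Ioc.mp hj
      have h1j : 1 ≤ j := hk1.trans hj'.1.le
      have hjK : j ≤ K := hj'.2.trans hmK
      have hwj := hw j h1j hjK
      have := (hT j h1j hjK v).2
      nlinarith
    constructor
    · exact div_le_div₀ (hA0.trans hAAm) hAAm hs hsS
    · rw [div_le_div_iff₀ hs hS]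
      nlinarith [mul_le_mul_of_nonneg_left hsS (sub_nonneg.mpr (hσA v)),
        mul_le_mul_of_nonneg_right (hAmsplit ▸ add_le_add_right hBm
          (∑ j ∈ Finset.Icc 1 k, w j * That j v) : (∑ j ∈ Finset.Icc 1 m, w j * That j v)
          ≤ (∑ j ∈ Finset.Icc 1 k, w j * That j v) + ∑ j ∈ Finset.Ioc k m, w j) hS.le]
  refine ⟨sand, ?_⟩
  -- cost sandwich
  have hbar_le_one : ∀ v, (∑ j ∈ Finset.Icc 1 k, w j * That j v
      + ∑ j ∈ Finset.Icc (k+1) K, w j) / (∑ j ∈ Finset.Icc 1 K, w j) ≤ 1 := by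
    intro v
    rw [div_le_one hS]
    have := hσA v
    linarith [hσS]
  have hTm_le_one : ∀ m, k ≤ m → m ≤ K → ∀ v,
      (∑ j ∈ Finset.Icc 1 m, w j * That j v) / (∑ j ∈ Finset.Icc 1 m, w j) ≤ 1 := by
    intro m hkm hmK v
    exact (sand m hkm hmK v).2.trans (hbar_le_one v)
  have hcost : ∀ m, k ≤ m → m ≤ K →
      optCost P θ f' (fun v =>
        (∑ j ∈ Finset.Icc 1 k, w j * That j v + ∑ j ∈ Finset.Icc (k+1) K, w j)
          / (∑ j ∈ Finset.Icc 1 K, w j))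
      ≤ optCost P θ f' (fun v =>
        (∑ j ∈ Finset.Icc 1 m, w j * That j v) / (∑ j ∈ Finset.Icc 1 m, w j))
      ∧ optCost P θ f' (fun v =>
        (∑ j ∈ Finset.Icc 1 m, w j * That j v) / (∑ j ∈ Finset.Icc 1 m, w j))
      ≤ optCost P θ f' (fun v =>
        (∑ j ∈ Finset.Icc 1 k, w j * That j v) / (∑ j ∈ Finset.Icc 1 K, w j)) := by
    intro m hkm hmK
    have hnem : (feasSet P θ (fun v =>
        (∑ j ∈ Finset.Icc 1 m, w j * That j v) / (∑ j ∈ Finset.Icc 1 m, w j))).Nonempty :=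
      hne.mono (feasSet_mono P θ _ _ (fun v => (sand m hkm hmK v).1))
    constructor
    · exact optCost_anti P θ f' _ _ (fun v => (sand m hkm hmK v).2) hbar_le_one hnem
    · exact optCost_anti P θ f' _ _ (fun v => (sand m hkm hmK v).1)
        (hTm_le_one m hkm hmK) hne
  intro m m' hkm hmK hkm' hm'K
  have h1 := hcost m hkm hmK
  have h2 := hcost m' hkm' hm'K
  rw [abs_le]
  constructor <;> linarith [h1.1, h1.2, h2.1, h2.2, hδ]
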